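/- Let Λ be a switch function on ℤ (Λ(n) = 1 for n large positive, 0 for n large negative) and P a projection on ℓ²(ℤ, ℂ^{2N}) whose kernel satisfies ∑_{n,n'} ‖P(n,n')‖ (1+|n|)^{−ν} e^{μ|n−n'|} ≤ C < ∞ for some μ, ν > 0 (trace norms of the 2N×2N blocks). Then the commutator [Λ, P] is trace class. -/

import Mathlib

open scoped ENNReal InnerProductSpace
set_option maxHeartbeats 1000000
set_option synthInstance.maxHeartbeats 1000000

noncomputable section

/-- The trace norm, defined as the supremum over pairs of finite orthonormal systems. -/
def traceNorm {H : Type*} [NormedAddCommGroup H] [InnerProductSpace ℂ H]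
    (T : H → H) : ℝ≥0∞ :=
  ⨆ (n : ℕ) (e : Fin n → H) (f : Fin n → H) (_ : Orthonormal ℂ e) (_ : Orthonormal ℂ f),
    ∑ i, ENNReal.ofReal ‖(inner ℂ (e i) (T (f i)) : ℂ)‖

/-- `T` is trace class iff its trace norm is finite. -/
def IsTraceClass {H : Type*} [NormedAddCommGroup H] [InnerProductSpace ℂ H]
    (T : H → H) : Prop :=
  traceNorm T ≠ ⊤

/-- `ℓ²(ℤ, ℂ^{2N})`. -/
abbrev H2N (N : ℕ) := lp (fun _ : ℤ => EuclideanSpace ℂ (Fin (2 * N))) 2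

/-- The matrix block `P(n, n') : ℂ^{2N} → ℂ^{2N}` of an operator `P` on `ℓ²(ℤ, ℂ^{2N})`. -/
def block {N : ℕ} (P : H2N N →L[ℂ] H2N N) (n n' : ℤ) :
    EuclideanSpace ℂ (Fin (2 * N)) → EuclideanSpace ℂ (Fin (2 * N)) :=
  fun v => (P (lp.single 2 n' v) : ∀ _ : ℤ, EuclideanSpace ℂ (Fin (2 * N))) n

/-- `M` is the multiplication operator by `Λ : ℤ → ℝ`. -/
def IsMultOp {N : ℕ} (Λ : ℤ → ℝ) (M : H2N N →L[ℂ] H2N N) : Prop :=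
  ∀ (ψ : H2N N) (n : ℤ), (M ψ : ∀ _ : ℤ, EuclideanSpace ℂ (Fin (2 * N))) n = (Λ n : ℂ) • ψ n

/-- A switch function: `1` for large positive argument, `0` for large negative argument. -/
def IsSwitch (Λ : ℤ → ℝ) : Prop :=
  ∃ m : ℤ, (∀ n ≥ m, Λ n = 1) ∧ (∀ n ≤ -m, Λ n = 0)

lemma ofReal_norm_hasSum_le {ι E : Type*} [NormedAddCommGroup E] {g : ι → E} {a : E}
    (h : HasSum g a) : ENNReal.ofReal ‖a‖ ≤ ∑' i, ENNReal.ofReal ‖g i‖ := by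
  simp only [ofReal_norm, enorm_eq_nnnorm]
  by_cases hs : Summable fun i => ‖g i‖₊
  · rw [← ENNReal.coe_tsum hs]
    have ha : a = ∑' i, g i := h.tsum_eq.symm
    exact ENNReal.coe_le_coe.mpr (ha ▸ nnnorm_tsum_le hs)
  · have : ∑' i, (‖g i‖₊ : ℝ≥0∞) = ⊤ := by
      by_contra hne
      exact hs (ENNReal.tsum_coe_ne_top_iff_summable.mp hne)
    simp [this]

lemma growth_bound {μ ν : ℝ} (hμ : 0 < μ) (hν : 0 < ν) :
    ∀ t : ℝ, 0 ≤ t → (1 + t) ^ ν ≤ (1 + ν / μ) ^ ν * Real.exp (μ * t) := by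
  intro t ht
  have h1 : (1 + t) ≤ (1 + ν / μ) * Real.exp ((μ / ν) * t) := by
    have he : (μ / ν) * t + 1 ≤ Real.exp ((μ / ν) * t) := Real.add_one_le_exp _
    have h2 : (1 + ν / μ) * ((μ / ν) * t + 1) = 1 + ν / μ + t + (μ / ν) * t := by
      field_simp; ring
    nlinarith [div_nonneg hν.le hμ.le, div_nonneg hμ.le hν.le,
      mul_nonneg (div_nonneg hμ.le hν.le) ht,
      mul_le_mul_of_nonneg_left he (by positivity : (0:ℝ) ≤ 1 + ν / μ)]
  calc (1 + t) ^ ν ≤ ((1 + ν / μ) * Real.exp ((μ / ν) * t)) ^ ν :=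
        Real.rpow_le_rpow (by linarith) h1 hν.le
    _ = (1 + ν / μ) ^ ν * (Real.exp ((μ / ν) * t)) ^ ν :=
        Real.mul_rpow (by positivity) (Real.exp_pos _).le
    _ = (1 + ν / μ) ^ ν * Real.exp (μ * t) := by
        rw [← Real.exp_mul]
        congr 1
        field_simp

lemma switch_bound {Λ : ℤ → ℝ} (hΛ : IsSwitch Λ) {μ ν : ℝ} (hμ : 0 < μ) (hν : 0 < ν) :
    ∃ C : ℝ, 0 ≤ C ∧ ∀ n n' : ℤ, |Λ n - Λ n'| ≤
      C * (Real.rpow (1 + |(n : ℝ)|) (-ν) * Real.exp (μ * |(n : ℝ) - (n' : ℝ)|)) := by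
  obtain ⟨m₀, h1₀, h0₀⟩ := hΛ
  set m : ℤ := max m₀ 1 with hm
  have hm1 : (1 : ℤ) ≤ m := le_max_right _ _
  have h1 : ∀ n : ℤ, m ≤ n → Λ n = 1 := fun n hn => h1₀ n (le_trans (le_max_left _ _) hn)
  have h0 : ∀ n : ℤ, n ≤ -m → Λ n = 0 := fun n hn =>
    h0₀ n (hn.trans (neg_le_neg (le_max_left _ _)))
  set B : ℝ := ∑ j ∈ Finset.Icc (-m) m, |Λ j| with hB
  set Bm : ℝ := max B 1 with hBm
  have hBm1 : (1:ℝ) ≤ Bm := le_max_right _ _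
  have habs : ∀ n : ℤ, |Λ n| ≤ Bm := by
    intro n
    rcases le_or_gt m n with h | h
    · rw [h1 n h]; simpa using hBm1
    rcases le_or_gt n (-m) with h' | h'
    · rw [h0 n h']; simp; linarith
    · refine le_trans ?_ (le_max_left _ _)
      exact Finset.single_le_sum (f := fun j => |Λ j|) (fun j _ => abs_nonneg _)
        (Finset.mem_Icc.mpr ⟨h'.le, h.le⟩)
  set K : ℝ := (1 + ν / μ) ^ ν with hK
  have hK0 : 0 ≤ K := Real.rpow_nonneg (by positivity) _
  set KE : ℝ := K * Real.exp (μ * (m : ℝ)) with hKE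
  have hKE0 : 0 ≤ KE := mul_nonneg hK0 (Real.exp_pos _).le
  refine ⟨2 * Bm * KE, by positivity, ?_⟩
  intro n n'
  have hrpos : (0:ℝ) < (1 + |(n : ℝ)|) ^ (-ν) * Real.exp (μ * |(n : ℝ) - (n' : ℝ)|) := by
    positivity
  by_cases hne : Λ n = Λ n'
  · rw [hne, sub_self, abs_zero]
    positivity
  -- key claim
  have claim : (1 + |(n : ℝ)|) ^ ν ≤ KE * Real.exp (μ * |(n : ℝ) - (n' : ℝ)|) := by
    have hexp1 : (1:ℝ) ≤ Real.exp (μ * |(n : ℝ) - (n' : ℝ)|) :=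
      Real.one_le_exp (by positivity)
    rcases le_or_gt m n with h | h
    · -- n ≥ m, so Λ n = 1 and n' < m
      have hn' : n' < m := by
        by_contra hc
        exact hne (by rw [h1 n h, h1 n' (not_lt.mp hc)])
      have habs_n : |(n:ℝ)| = (n:ℝ) := abs_of_pos (by exact_mod_cast lt_of_lt_of_le hm1 h)
      have hd : (n:ℝ) - m ≤ |(n:ℝ) - (n':ℝ)| := by
        rw [abs_of_nonneg (by exact_mod_cast sub_nonneg.mpr (hn'.le.trans h))]
        have : (n':ℝ) ≤ (m:ℝ) := by exact_mod_cast hn'.le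
        linarith
      calc (1 + |(n:ℝ)|) ^ ν ≤ K * Real.exp (μ * (n:ℝ)) := by
            rw [habs_n]
            exact growth_bound hμ hν (n:ℝ) (by exact_mod_cast le_trans (by norm_num) (hm1.trans h))
        _ = KE * Real.exp (μ * ((n:ℝ) - m)) := by
            rw [hKE, mul_assoc, ← Real.exp_add]; ring_nf
        _ ≤ KE * Real.exp (μ * |(n:ℝ) - (n':ℝ)|) := by
            gcongr
    rcases le_or_gt n (-m) with h' | h'
    · -- n ≤ -m
      have hn' : -m < n' := by
        by_contra hc
        exact hne (by rw [h0 n h', h0 n' (not_lt.mp hc)])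
      have habs_n : |(n:ℝ)| = -(n:ℝ) := by
        apply abs_of_neg
        have : (n:ℝ) ≤ -(m:ℝ) := by exact_mod_cast h'
        have : (1:ℝ) ≤ (m:ℝ) := by exact_mod_cast hm1
        linarith
      have hd : -(n:ℝ) - m ≤ |(n:ℝ) - (n':ℝ)| := by
        rw [abs_sub_comm, abs_of_nonneg]
        · have : -(m:ℝ) ≤ (n':ℝ) := by exact_mod_cast hn'.le
          linarith
        · have : (n:ℝ) ≤ -(m:ℝ) := by exact_mod_cast h'
          have : -(m:ℝ) ≤ (n':ℝ) := by exact_mod_cast hn'.le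
          linarith
      calc (1 + |(n:ℝ)|) ^ ν ≤ K * Real.exp (μ * (-(n:ℝ))) := by
            rw [habs_n]
            refine growth_bound hμ hν _ ?_
            have : (n:ℝ) ≤ -(m:ℝ) := by exact_mod_cast h'
            have : (1:ℝ) ≤ (m:ℝ) := by exact_mod_cast hm1
            linarith
        _ = KE * Real.exp (μ * (-(n:ℝ) - m)) := by
            rw [hKE, mul_assoc, ← Real.exp_add]; ring_nf
        _ ≤ KE * Real.exp (μ * |(n:ℝ) - (n':ℝ)|) := by
            gcongr
    · -- middle: |n| ≤ m
      have habs_le : |(n:ℝ)| ≤ (m:ℝ) := by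
        rw [← Int.cast_abs]
        exact_mod_cast (abs_le.mpr ⟨h'.le, h.le⟩)
      calc (1 + |(n:ℝ)|) ^ ν ≤ (1 + (m:ℝ)) ^ ν :=
            Real.rpow_le_rpow (by positivity) (by linarith) hν.le
        _ ≤ K * Real.exp (μ * (m:ℝ)) :=
            growth_bound hμ hν (m:ℝ) (by exact_mod_cast zero_le_one.trans hm1)
        _ = KE := rfl
        _ ≤ KE * Real.exp (μ * |(n:ℝ) - (n':ℝ)|) := le_mul_of_one_le_right hKE0 hexp1
  -- conclude
  have hLhs : |Λ n - Λ n'| ≤ 2 * Bm := by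
    calc |Λ n - Λ n'| ≤ |Λ n| + |Λ n'| := abs_sub _ _
      _ ≤ Bm + Bm := add_le_add (habs n) (habs n')
      _ = 2 * Bm := by ring
  have hx : (0:ℝ) < (1 + |(n : ℝ)|) ^ ν := Real.rpow_pos_of_pos (by positivity) _
  rw [show Real.rpow (1 + |(n:ℝ)|) (-ν) = ((1 + |(n:ℝ)|) ^ ν)⁻¹ from
    Real.rpow_neg (by positivity) ν]
  have hfinal : (1:ℝ) ≤ KE * (((1 + |(n : ℝ)|) ^ ν)⁻¹ * Real.exp (μ * |(n : ℝ) - (n' : ℝ)|)) := by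
    have heq : KE * (((1 + |(n : ℝ)|) ^ ν)⁻¹ * Real.exp (μ * |(n : ℝ) - (n' : ℝ)|)) =
        (KE * Real.exp (μ * |(n : ℝ) - (n' : ℝ)|)) / ((1 + |(n : ℝ)|) ^ ν) := by
      rw [div_eq_mul_inv]; ring
    rw [heq]
    exact (one_le_div hx).mpr claim
  calc |Λ n - Λ n'| ≤ 2 * Bm := hLhs
    _ = 2 * Bm * 1 := (mul_one _).symm
    _ ≤ 2 * Bm * (KE * (((1 + |(n : ℝ)|) ^ ν)⁻¹ * Real.exp (μ * |(n : ℝ) - (n' : ℝ)|))) := by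
        have h2Bm : (0:ℝ) ≤ 2 * Bm := by linarith
        exact mul_le_mul_of_nonneg_left hfinal h2Bm
    _ = 2 * Bm * KE * (((1 + |(n : ℝ)|) ^ ν)⁻¹ * Real.exp (μ * |(n : ℝ) - (n' : ℝ)|)) := by ring

lemma sum_inner_le_traceNorm {d : ℕ}
    (A : EuclideanSpace ℂ (Fin d) →ₗ[ℂ] EuclideanSpace ℂ (Fin d))
    {k : ℕ} (u v : Fin k → EuclideanSpace ℂ (Fin d))
    (hu : ∀ x, ∑ p, ‖(inner ℂ (u p) x : ℂ)‖ ^ 2 ≤ ‖x‖ ^ 2)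
    (hv : ∀ x, ∑ p, ‖(inner ℂ (v p) x : ℂ)‖ ^ 2 ≤ ‖x‖ ^ 2) :
    ∑ p, ENNReal.ofReal ‖(inner ℂ (u p) (A (v p)) : ℂ)‖ ≤ traceNorm (⇑A) := by
  classical
  have hB : (LinearMap.adjoint A * A).IsSymmetric := LinearMap.isSymmetric_adjoint_mul_self A
  have hn : Module.finrank ℂ (EuclideanSpace ℂ (Fin d)) = d := finrank_euclideanSpace_fin
  set w : OrthonormalBasis (Fin d) ℂ (EuclideanSpace ℂ (Fin d)) := hB.eigenvectorBasis hn with hw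
  set t : Fin d → ℝ := hB.eigenvalues hn with ht
  have hBw : ∀ i, (LinearMap.adjoint A * A) (w i) = (t i : ℂ) • w i :=
    fun i => hB.apply_eigenvectorBasis hn i
  have hAA : ∀ i j, (inner ℂ (A (w i)) (A (w j)) : ℂ) = if i = j then (t j : ℂ) else 0 := by
    intro i j
    rw [← LinearMap.adjoint_inner_right]
    have : LinearMap.adjoint A (A (w j)) = (t j : ℂ) • w j := hBw j
    rw [this, inner_smul_right, orthonormal_iff_ite.mp w.orthonormal i j]
    by_cases h : i = j <;> simp [h]
  have hnormAw : ∀ i, ‖A (w i)‖ ^ 2 = t i := by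
    intro i
    have h := hAA i i
    rw [if_pos rfl] at h
    rw [← inner_self_eq_norm_sq (𝕜 := ℂ), h]
    simp
  have ht0 : ∀ i, 0 ≤ t i := fun i => (hnormAw i) ▸ sq_nonneg _
  set s : Fin d → ℝ := fun i => Real.sqrt (t i) with hs
  have hs0 : ∀ i, 0 ≤ s i := fun i => Real.sqrt_nonneg _
  have hs2 : ∀ i, s i ^ 2 = t i := fun i => Real.sq_sqrt (ht0 i)
  have hnorms : ∀ i, ‖A (w i)‖ = s i := by
    intro i
    rw [hs]
    simp only []
    rw [← hnormAw i, Real.sqrt_sq (norm_nonneg _)]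
  set J : Finset (Fin d) := Finset.univ.filter (fun i => t i ≠ 0) with hJ
  have hsne : ∀ i ∈ J, s i ≠ 0 := by
    intro i hi
    have hti : t i ≠ 0 := (Finset.mem_filter.mp hi).2
    intro hc
    apply hti
    have := hs2 i
    rw [hc] at this
    simpa using this.symm
  set z : Fin d → EuclideanSpace ℂ (Fin d) := fun i => (((s i : ℝ) : ℂ))⁻¹ • A (w i) with hz
  have hcs_ne : ∀ i ∈ J, ((s i : ℝ) : ℂ) ≠ 0 := by
    intro i hi
    exact_mod_cast hsne i hi
  have hAwz : ∀ i ∈ J, A (w i) = ((s i : ℝ) : ℂ) • z i := by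
    intro i hi
    rw [hz]
    simp only []
    rw [smul_smul, mul_inv_cancel₀ (hcs_ne i hi), one_smul]
  have hAw0 : ∀ i ∉ J, A (w i) = 0 := by
    intro i hi
    have hti : t i = 0 := by simpa [hJ] using hi
    have := hnormAw i
    rw [hti, pow_eq_zero_iff (two_ne_zero)] at this
    exact norm_eq_zero.mp this
  have hzinner : ∀ i ∈ J, ∀ j ∈ J, (inner ℂ (z i) (z j) : ℂ) = if i = j then 1 else 0 := by
    intro i hi j hj
    rw [hz]
    simp only []
    rw [inner_smul_left, inner_smul_right, hAA i j]
    rw [map_inv₀, Complex.conj_ofReal]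
    by_cases h : i = j
    · subst h
      rw [if_pos rfl, if_pos rfl]
      have : ((t i : ℝ) : ℂ) = ((s i : ℝ) : ℂ) ^ 2 := by
        rw [← hs2 i]; push_cast; ring
      rw [this]
      field_simp [hcs_ne i hi]
    · rw [if_neg h, if_neg h, mul_zero, mul_zero]
  have hznorm : ∀ i ∈ J, ‖z i‖ = 1 := by
    intro i hi
    have h := hzinner i hi i hi
    rw [if_pos rfl] at h
    have h2 : ‖z i‖ ^ 2 = 1 := by
      rw [← inner_self_eq_norm_sq (𝕜 := ℂ), h]
      simp
    nlinarith [norm_nonneg (z i)]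
  have hdecomp : ∀ x, A x = ∑ i ∈ J, (inner ℂ (w i) x : ℂ) • A (w i) := by
    intro x
    have hx : A x = ∑ i, (inner ℂ (w i) x : ℂ) • A (w i) := by
      conv_lhs => rw [← w.sum_repr x]
      rw [map_sum]
      refine Finset.sum_congr rfl fun i _ => ?_
      rw [w.repr_apply_apply, map_smul]
    rw [hx]
    exact (Finset.sum_subset (Finset.filter_subset _ _)
      (fun i _ hi => by rw [hAw0 i hi, smul_zero])).symm
  have hexpand : ∀ p, (inner ℂ (u p) (A (v p)) : ℂ) =
      ∑ i ∈ J, (inner ℂ (w i) (v p) : ℂ) * (((s i : ℝ) : ℂ) * inner ℂ (u p) (z i)) := by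
    intro p
    rw [hdecomp (v p), inner_sum]
    refine Finset.sum_congr rfl fun i hi => ?_
    rw [inner_smul_right, hAwz i hi, inner_smul_right]
  have hreal : ∑ p, ‖(inner ℂ (u p) (A (v p)) : ℂ)‖ ≤ ∑ i ∈ J, s i := by
    calc ∑ p, ‖(inner ℂ (u p) (A (v p)) : ℂ)‖
        ≤ ∑ p, ∑ i ∈ J, ‖(inner ℂ (w i) (v p) : ℂ)‖ * (s i * ‖(inner ℂ (u p) (z i) : ℂ)‖) := by
          refine Finset.sum_le_sum fun p _ => ?_
          rw [hexpand p]
          refine (norm_sum_le _ _).trans (le_of_eq ?_)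
          refine Finset.sum_congr rfl fun i hi => ?_
          rw [norm_mul, norm_mul, Complex.norm_real, Real.norm_eq_abs, abs_of_nonneg (hs0 i)]
      _ = ∑ i ∈ J, s i * ∑ p, ‖(inner ℂ (w i) (v p) : ℂ)‖ * ‖(inner ℂ (u p) (z i) : ℂ)‖ := by
          rw [Finset.sum_comm]
          refine Finset.sum_congr rfl fun i _ => ?_
          rw [Finset.mul_sum]
          exact Finset.sum_congr rfl fun p _ => by ring
      _ ≤ ∑ i ∈ J, s i * 1 := by
          refine Finset.sum_le_sum fun i hi => mul_le_mul_of_nonneg_left ?_ (hs0 i)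
          have hcs := Finset.sum_mul_sq_le_sq_mul_sq Finset.univ
            (fun p => ‖(inner ℂ (w i) (v p) : ℂ)‖) (fun p => ‖(inner ℂ (u p) (z i) : ℂ)‖)
          have h1 : ∑ p, ‖(inner ℂ (w i) (v p) : ℂ)‖ ^ 2 ≤ 1 := by
            have hb := hv (w i)
            have hwn : ‖w i‖ = 1 := w.orthonormal.1 i
            rw [hwn, one_pow] at hb
            refine le_trans (le_of_eq ?_) hb
            exact Finset.sum_congr rfl fun p _ => by rw [norm_inner_symm]
          have h2 : ∑ p, ‖(inner ℂ (u p) (z i) : ℂ)‖ ^ 2 ≤ 1 := by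
            have hb := hu (z i)
            rw [hznorm i hi, one_pow] at hb
            exact hb
          have hnn : 0 ≤ ∑ p, ‖(inner ℂ (w i) (v p) : ℂ)‖ * ‖(inner ℂ (u p) (z i) : ℂ)‖ :=
            Finset.sum_nonneg fun p _ => mul_nonneg (norm_nonneg _) (norm_nonneg _)
          have hX0 : 0 ≤ ∑ p, ‖(inner ℂ (w i) (v p) : ℂ)‖ ^ 2 :=
            Finset.sum_nonneg fun p _ => sq_nonneg _
          have hY0 : 0 ≤ ∑ p, ‖(inner ℂ (u p) (z i) : ℂ)‖ ^ 2 :=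
            Finset.sum_nonneg fun p _ => sq_nonneg _
          nlinarith [hcs, h1, h2, hnn, hX0, hY0]
      _ = ∑ i ∈ J, s i := by simp
  -- pass to ENNReal and compare with traceNorm
  have hofreal : ∑ p, ENNReal.ofReal ‖(inner ℂ (u p) (A (v p)) : ℂ)‖ ≤
      ∑ i ∈ J, ENNReal.ofReal (s i) := by
    rw [← ENNReal.ofReal_sum_of_nonneg (fun _ _ => norm_nonneg _),
      ← ENNReal.ofReal_sum_of_nonneg (fun i _ => hs0 i)]
    exact ENNReal.ofReal_le_ofReal hreal
  refine hofreal.trans ?_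
  set eqv : Fin J.card ≃ {x // x ∈ J} := J.equivFin.symm with heqv
  set ee : Fin J.card → EuclideanSpace ℂ (Fin d) := fun p => z (eqv p : Fin d) with hee'
  set ff : Fin J.card → EuclideanSpace ℂ (Fin d) := fun p => w (eqv p : Fin d) with hff'
  have hff : Orthonormal ℂ ff :=
    w.orthonormal.comp (fun p => ((eqv p : Fin d))) (Subtype.val_injective.comp eqv.injective)
  have hee : Orthonormal ℂ ee := by
    rw [orthonormal_iff_ite]
    intro p q
    rw [hee']
    simp only []
    rw [hzinner _ (eqv p).2 _ (eqv q).2]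
    by_cases h : p = q
    · simp [h]
    · rw [if_neg (fun hc => h (eqv.injective (Subtype.ext hc))), if_neg h]
  have hval : ∀ p, (inner ℂ (ee p) (A (ff p)) : ℂ) = ((s (eqv p : Fin d) : ℝ) : ℂ) := by
    intro p
    rw [hee', hff']
    simp only []
    rw [hAwz _ (eqv p).2, inner_smul_right, hzinner _ (eqv p).2 _ (eqv p).2, if_pos rfl, mul_one]
  have hsum_eq : ∑ i ∈ J, ENNReal.ofReal (s i) =
      ∑ p : Fin J.card, ENNReal.ofReal ‖(inner ℂ (ee p) (A (ff p)) : ℂ)‖ := by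
    rw [← Finset.sum_coe_sort J (fun i => ENNReal.ofReal (s i)),
      ← Equiv.sum_comp eqv (fun j : {x // x ∈ J} => ENNReal.ofReal (s (j : Fin d)))]
    refine Finset.sum_congr rfl fun p _ => ?_
    rw [hval p, Complex.norm_real, Real.norm_eq_abs, abs_of_nonneg (hs0 _)]
  rw [hsum_eq, traceNorm]
  exact le_iSup_of_le J.card (le_iSup_of_le ee (le_iSup_of_le ff
    (le_iSup_of_le hee (le_iSup_of_le hff le_rfl))))

lemma bessel_coord {E : Type*} [NormedAddCommGroup E] [InnerProductSpace ℂ E]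
    {k : ℕ} {g : Fin k → lp (fun _ : ℤ => E) 2} (hg : Orthonormal ℂ g) (n : ℤ) (x : E) :
    ∑ p, ‖(inner ℂ ((g p : ∀ _ : ℤ, E) n) x : ℂ)‖ ^ 2 ≤ ‖x‖ ^ 2 := by
  classical
  have hnorm : ‖(lp.single 2 n x : lp (fun _ : ℤ => E) 2)‖ = ‖x‖ :=
    lp.norm_single (E := fun _ : ℤ => E) (p := 2) (by norm_num) n x
  have h := hg.sum_inner_products_le (lp.single 2 n x) (s := Finset.univ)
  rw [hnorm] at h
  refine le_trans (le_of_eq ?_) h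
  refine Finset.sum_congr rfl fun p _ => ?_
  rw [← lp.inner_single_right n x (g p)]

/-- Let `Λ` be a switch function and `P` a projection on `ℓ²(ℤ, ℂ^{2N})` whose blocks satisfy
`∑_{n,n'} ‖P(n,n')‖₁ (1+|n|)^{-ν} e^{μ |n-n'|} ≤ C < ∞` for some `μ, ν > 0`.  Then the
commutator `[Λ, P]` is trace class. -/
theorem commutator_switch_projection_traceClass {N : ℕ}
    (P : H2N N →L[ℂ] H2N N) (hsa : IsSelfAdjoint P) (hidem : P ∘L P = P)
    (Λ : ℤ → ℝ) (hΛ : IsSwitch Λ) (M : H2N N →L[ℂ] H2N N) (hM : IsMultOp Λ M)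
    (μ ν : ℝ) (hμ : 0 < μ) (hν : 0 < ν)
    (hdecay : (∑' q : ℤ × ℤ,
        traceNorm (block P q.1 q.2) *
          ENNReal.ofReal (Real.rpow (1 + |(q.1 : ℝ)|) (-ν) *
            Real.exp (μ * |(q.1 : ℝ) - (q.2 : ℝ)|))) ≠ ⊤) :
    IsTraceClass (fun ψ => (M ∘L P - P ∘L M) ψ) := by
  classical
  obtain ⟨C, hC0, hC⟩ := switch_bound hΛ hμ hν
  set T' : H2N N →L[ℂ] H2N N := M ∘L P - P ∘L M with hT'def
  -- the multiplication operator on basis vectors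
  have hMsingle : ∀ (n' : ℤ) (v : EuclideanSpace ℂ (Fin (2 * N))),
      M (lp.single 2 n' v) = ((Λ n' : ℝ) : ℂ) • lp.single 2 n' v := by
    intro n' v
    apply lp.ext
    funext j
    rw [lp.coeFn_smul, Pi.smul_apply, hM]
    by_cases h : j = n'
    · subst h; rw [lp.single_apply_self]
    · rw [lp.single_apply_ne _ _ _ h, smul_zero, smul_zero]
  -- blocks of the commutator
  have hblockT : ∀ (n n' : ℤ) (v : EuclideanSpace ℂ (Fin (2 * N))),
      (T' (lp.single 2 n' v) : ∀ _ : ℤ, EuclideanSpace ℂ (Fin (2 * N))) n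
        = ((Λ n - Λ n' : ℝ) : ℂ) • block P n n' v := by
    intro n n' v
    have hsub : (T' (lp.single 2 n' v) : ∀ _ : ℤ, EuclideanSpace ℂ (Fin (2 * N))) n
        = (M (P (lp.single 2 n' v)) : ∀ _ : ℤ, EuclideanSpace ℂ (Fin (2 * N))) n
          - (P (M (lp.single 2 n' v)) : ∀ _ : ℤ, EuclideanSpace ℂ (Fin (2 * N))) n := by
      rw [hT'def]
      rw [ContinuousLinearMap.sub_apply, lp.coeFn_sub, Pi.sub_apply]
      rfl
    rw [hsub, hM, hMsingle, map_smul, lp.coeFn_smul, Pi.smul_apply,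
      Complex.ofReal_sub, sub_smul]
    rfl
  -- linear structure of the blocks of P
  have hsingle_add : ∀ (n' : ℤ) (x y : EuclideanSpace ℂ (Fin (2 * N))),
      (lp.single 2 n' (x + y) : H2N N) = lp.single 2 n' x + lp.single 2 n' y := by
    intro n' x y
    apply lp.ext
    funext j
    rw [lp.coeFn_add, Pi.add_apply]
    by_cases h : j = n'
    · subst h; rw [lp.single_apply_self, lp.single_apply_self, lp.single_apply_self]
    · rw [lp.single_apply_ne _ _ _ h, lp.single_apply_ne _ _ _ h,
        lp.single_apply_ne _ _ _ h, add_zero]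
  -- weight function
  set W : ℤ × ℤ → ℝ := fun q => Real.rpow (1 + |(q.1 : ℝ)|) (-ν) *
      Real.exp (μ * |(q.1 : ℝ) - (q.2 : ℝ)|) with hW
  set D : ℝ≥0∞ := ∑' q : ℤ × ℤ, traceNorm (block P q.1 q.2) * ENNReal.ofReal (W q) with hD
  have hDne : D ≠ ⊤ := hdecay
  rw [IsTraceClass]
  refine ne_top_of_le_ne_top (ENNReal.mul_ne_top ENNReal.ofReal_ne_top hDne)
    (?_ : traceNorm _ ≤ ENNReal.ofReal C * D)
  rw [traceNorm]
  refine iSup_le fun k => iSup_le fun e => iSup_le fun f => iSup_le fun he => iSup_le fun hf => ?_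
  -- Step A : pointwise expansion into blocks
  have hstepA : ∀ p : Fin k, ENNReal.ofReal ‖(inner ℂ (e p) (T' (f p)) : ℂ)‖ ≤
      ∑' q : ℤ × ℤ, ENNReal.ofReal
        ‖(inner ℂ ((e p : ∀ _ : ℤ, EuclideanSpace ℂ (Fin (2 * N))) q.1)
            ((T' (lp.single 2 q.2 ((f p : ∀ _ : ℤ, EuclideanSpace ℂ (Fin (2 * N))) q.2))
              : ∀ _ : ℤ, EuclideanSpace ℂ (Fin (2 * N))) q.1) : ℂ)‖ := by
    intro p
    have h1 : HasSum
        (fun n' : ℤ => T' (lp.single 2 n' ((f p : ∀ _ : ℤ, EuclideanSpace ℂ (Fin (2 * N))) n')))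
        (T' (f p)) := (lp.hasSum_single (by norm_num) (f p)).mapL T'
    have h2 : HasSum
        (fun n' : ℤ => (inner ℂ (e p)
          (T' (lp.single 2 n' ((f p : ∀ _ : ℤ, EuclideanSpace ℂ (Fin (2 * N))) n'))) : ℂ))
        (inner ℂ (e p) (T' (f p))) := h1.mapL (innerSL ℂ (e p))
    refine (ofReal_norm_hasSum_le h2).trans ?_
    rw [ENNReal.tsum_prod', ENNReal.tsum_comm]
    refine ENNReal.tsum_le_tsum fun n' => ?_
    exact ofReal_norm_hasSum_le (lp.hasSum_inner (𝕜 := ℂ) (e p)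
      (T' (lp.single 2 n' ((f p : ∀ _ : ℤ, EuclideanSpace ℂ (Fin (2 * N))) n'))))
  -- Step C : per-block bound
  have hstepC : ∀ q : ℤ × ℤ,
      (∑ p : Fin k, ENNReal.ofReal
        ‖(inner ℂ ((e p : ∀ _ : ℤ, EuclideanSpace ℂ (Fin (2 * N))) q.1)
            ((T' (lp.single 2 q.2 ((f p : ∀ _ : ℤ, EuclideanSpace ℂ (Fin (2 * N))) q.2))
              : ∀ _ : ℤ, EuclideanSpace ℂ (Fin (2 * N))) q.1) : ℂ)‖)
      ≤ ENNReal.ofReal C * (traceNorm (block P q.1 q.2) * ENNReal.ofReal (W q)) := by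
    rintro ⟨n, n'⟩
    simp only []
    -- the block of P as a linear map
    set A : EuclideanSpace ℂ (Fin (2 * N)) →ₗ[ℂ] EuclideanSpace ℂ (Fin (2 * N)) :=
      { toFun := block P n n',
        map_add' := fun x y => by
          simp only [block, hsingle_add, map_add, lp.coeFn_add, Pi.add_apply],
        map_smul' := fun c x => by
          simp only [block, lp.single_smul, map_smul, lp.coeFn_smul, Pi.smul_apply,
            RingHom.id_apply] } with hA
    have hkey := sum_inner_le_traceNorm A
      (fun p => (e p : ∀ _ : ℤ, EuclideanSpace ℂ (Fin (2 * N))) n)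
      (fun p => (f p : ∀ _ : ℤ, EuclideanSpace ℂ (Fin (2 * N))) n')
      (fun x => bessel_coord he n x) (fun x => bessel_coord hf n' x)
    have hkey' : ∑ p : Fin k, ENNReal.ofReal
        ‖(inner ℂ ((e p : ∀ _ : ℤ, EuclideanSpace ℂ (Fin (2 * N))) n)
            (block P n n' ((f p : ∀ _ : ℤ, EuclideanSpace ℂ (Fin (2 * N))) n')) : ℂ)‖
        ≤ traceNorm (block P n n') := hkey
    calc ∑ p : Fin k, ENNReal.ofReal
              ‖(inner ℂ ((e p : ∀ _ : ℤ, EuclideanSpace ℂ (Fin (2 * N))) n)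
                ((T' (lp.single 2 n' ((f p : ∀ _ : ℤ, EuclideanSpace ℂ (Fin (2 * N))) n'))
                  : ∀ _ : ℤ, EuclideanSpace ℂ (Fin (2 * N))) n) : ℂ)‖
          = ∑ p : Fin k, ENNReal.ofReal (|Λ n - Λ n'|) * ENNReal.ofReal
              ‖(inner ℂ ((e p : ∀ _ : ℤ, EuclideanSpace ℂ (Fin (2 * N))) n)
                (block P n n' ((f p : ∀ _ : ℤ, EuclideanSpace ℂ (Fin (2 * N))) n')) : ℂ)‖ := by
            refine Finset.sum_congr rfl fun p _ => ?_
            rw [hblockT, inner_smul_right, norm_mul, Complex.norm_real, Real.norm_eq_abs,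
              ENNReal.ofReal_mul (abs_nonneg _)]
      _ = ENNReal.ofReal (|Λ n - Λ n'|) * ∑ p : Fin k, ENNReal.ofReal
              ‖(inner ℂ ((e p : ∀ _ : ℤ, EuclideanSpace ℂ (Fin (2 * N))) n)
                (block P n n' ((f p : ∀ _ : ℤ, EuclideanSpace ℂ (Fin (2 * N))) n')) : ℂ)‖ := by
            rw [Finset.mul_sum]
      _ ≤ ENNReal.ofReal (|Λ n - Λ n'|) * traceNorm (block P n n') :=
            mul_le_mul_right hkey' _
      _ ≤ (ENNReal.ofReal C * ENNReal.ofReal (W (n, n'))) * traceNorm (block P n n') := by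
            refine mul_le_mul_left ?_ _
            rw [← ENNReal.ofReal_mul hC0]
            exact ENNReal.ofReal_le_ofReal (hC n n')
      _ = ENNReal.ofReal C * (traceNorm (block P n n') * ENNReal.ofReal (W (n, n'))) := by
            ring
  -- assemble
  calc ∑ p : Fin k, ENNReal.ofReal ‖(inner ℂ (e p) (T' (f p)) : ℂ)‖
        ≤ ∑ p : Fin k, ∑' q : ℤ × ℤ, ENNReal.ofReal
            ‖(inner ℂ ((e p : ∀ _ : ℤ, EuclideanSpace ℂ (Fin (2 * N))) q.1)
              ((T' (lp.single 2 q.2 ((f p : ∀ _ : ℤ, EuclideanSpace ℂ (Fin (2 * N))) q.2))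
                : ∀ _ : ℤ, EuclideanSpace ℂ (Fin (2 * N))) q.1) : ℂ)‖ :=
          Finset.sum_le_sum fun p _ => hstepA p
    _ = ∑' q : ℤ × ℤ, ∑ p : Fin k, ENNReal.ofReal
            ‖(inner ℂ ((e p : ∀ _ : ℤ, EuclideanSpace ℂ (Fin (2 * N))) q.1)
              ((T' (lp.single 2 q.2 ((f p : ∀ _ : ℤ, EuclideanSpace ℂ (Fin (2 * N))) q.2))
                : ∀ _ : ℤ, EuclideanSpace ℂ (Fin (2 * N))) q.1) : ℂ)‖ :=
          (Summable.tsum_finsetSum fun p _ => ENNReal.summable).symm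
    _ ≤ ∑' q : ℤ × ℤ, ENNReal.ofReal C *
            (traceNorm (block P q.1 q.2) * ENNReal.ofReal (W q)) :=
          ENNReal.tsum_le_tsum hstepC
    _ = ENNReal.ofReal C * D := by rw [ENNReal.tsum_mul_left, hD]
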